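/- Let k, l ∈ ℕ with l ≥ 1 and let ν = C(l+k−1, k−1) be the dimension of the space of homogeneous polynomials of degree l in k variables. Then there exist linear transformations L₁, ..., L_ν of ℝ^k with integer coefficients and determinant 1 (hence restricting to automorphisms of ℤ^k) such that: for each multi-index γ₀ with |γ₀| = l there exist integers c₀, ..., c_ν with c₀ > 0 so that for every homogeneous polynomial P of degree l in k variables, if θ is the coefficient of x^{γ₀} in P and σ_j is the coefficient of x₁^l in P(L_j(x)), then c₀·θ = c₁·σ₁ + ... + c_ν·σ_ν. -/

import Mathlib

open MvPolynomial

/-- A multivariate polynomial over `ℚ` vanishing at all integer points is zero. -/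
lemma vce_eval_int_zero : ∀ {n : ℕ} (p : MvPolynomial (Fin n) ℚ),
    (∀ x : Fin n → ℤ, eval (fun i => (x i : ℚ)) p = 0) → p = 0 := by
  intro n
  induction n with
  | zero =>
    intro p h
    obtain ⟨a, rfl⟩ := C_surjective (Fin 0) p
    have := h (fun _ => 0)
    simpa using this
  | succ n ih =>
    intro p h
    have hq : MvPolynomial.finSuccEquiv ℚ n p = 0 := by
      apply Polynomial.ext
      intro i
      rw [Polynomial.coeff_zero]
      apply ih
      intro x
      have hr : ((MvPolynomial.finSuccEquiv ℚ n p).map (eval fun i => (x i : ℚ))) = 0 := by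
        apply Polynomial.eq_zero_of_infinite_isRoot
        apply Set.Infinite.mono (s := Set.range (Int.cast : ℤ → ℚ))
        · rintro _ ⟨t, rfl⟩
          have ht := h (Fin.cons t x)
          have hpt : (fun i => (((Fin.cons t x : Fin (n+1) → ℤ) i : ℤ) : ℚ)) =
              Fin.cons (t : ℚ) (fun i => (x i : ℚ)) := by
            funext i
            refine Fin.cases (motive := fun i => (((Fin.cons t x : Fin (n+1) → ℤ) i : ℤ) : ℚ) =
              (Fin.cons (t : ℚ) (fun i => (x i : ℚ)) : Fin (n+1) → ℚ) i) ?_ ?_ i <;> simp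
          rw [hpt, MvPolynomial.eval_eq_eval_mv_eval'] at ht
          exact ht
        · exact Set.infinite_range_of_injective Int.cast_injective
      have := congrArg (fun r => Polynomial.coeff r i) hr
      simpa [Polynomial.coeff_map] using this
    have := (map_eq_zero_iff _ (AlgEquiv.injective _)).mp hq
    exact this

lemma vce_multiset_prod {k : ℕ} {M : Type*} [CommMonoid M] (γ : Fin k →₀ ℕ) (g : Fin k → M) :
    ((Finsupp.toMultiset γ).map g).prod = γ.prod fun i e => g i ^ e := by
  rw [Finsupp.toMultiset_map, Finsupp.prod_toMultiset]
  exact Finsupp.prod_mapDomain_index (fun b => pow_zero b) (fun b m n => pow_add _ _ _)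

lemma vce_card_toMultiset {k : ℕ} (γ : Fin k →₀ ℕ) :
    Multiset.card (Finsupp.toMultiset γ) = γ.degree := by
  rw [Finsupp.card_toMultiset]; rfl

/-- Coefficient of `x_{i0}^n` in a product of linear forms. -/
lemma vce_coeff_single_prod {R : Type*} [CommRing R] {k : ℕ} (i0 : Fin k) (n : ℕ)
    (s : Multiset (Fin k → R)) :
    coeff (Finsupp.single i0 n) (s.map (fun w => ∑ j, C (w j) * X j)).prod
      = if Multiset.card s = n then (s.map (fun w => w i0)).prod else 0 := by
  induction s using Multiset.induction generalizing n with
  | empty =>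
    simp only [Multiset.map_zero, Multiset.prod_zero, Multiset.card_zero, coeff_one]
    by_cases hn : n = 0
    · subst hn; simp
    · rw [if_neg]
      · exact (if_neg (by omega : ¬ (0 = n))).symm
      simp [eq_comm, Finsupp.single_eq_zero, hn]
  | cons w s ih =>
    rw [Multiset.map_cons, Multiset.prod_cons]
    have expand : (∑ j, C (w j) * X j) * (s.map (fun w => ∑ j, C (w j) * X j)).prod
        = ∑ j, C (w j) * ((s.map (fun w => ∑ j, C (w j) * X j)).prod * X j) := by
      rw [Finset.sum_mul]; congr 1; funext j; ring
    rw [expand, coeff_sum]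
    simp only [coeff_C_mul, coeff_mul_X']
    rcases n with _ | m
    · simp only [Finsupp.single_zero, Finsupp.support_zero]
      simp
    · have hsupp : (Finsupp.single i0 (m+1)).support = {i0} :=
        Finsupp.support_single_ne_zero _ (by omega)
      rw [Finset.sum_eq_single i0]
      · rw [hsupp, if_pos (Finset.mem_singleton_self i0)]
        have hsub : Finsupp.single i0 (m+1) - Finsupp.single i0 1 = Finsupp.single i0 m := by
          ext j
          simp only [Finsupp.tsub_apply, Finsupp.single_apply]
          by_cases hj : i0 = j <;> simp [hj]
        rw [hsub, ih m, Multiset.card_cons, Multiset.map_cons, Multiset.prod_cons]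
        by_cases hc : Multiset.card s = m
        · rw [if_pos hc, if_pos (by omega)]
        · rw [if_neg hc, if_neg (by omega), mul_zero]
      · intro j _ hj
        rw [hsupp, if_neg (by simpa using hj), mul_zero]
      · intro h; exact absurd (Finset.mem_univ i0) h

/-- Extracting the coefficient of `x_{i0}^l` after a linear substitution amounts to
evaluating at the `i0`-th column, for homogeneous polynomials. -/
lemma vce_coeff_aeval {R : Type*} [CommRing R] {k : ℕ} (i0 : Fin k) (l : ℕ)
    (w : Fin k → Fin k → R) (P : MvPolynomial (Fin k) R) (hP : P.IsHomogeneous l) :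
    coeff (Finsupp.single i0 l) (aeval (fun i => ∑ j, C (w i j) * X j) P)
      = eval (fun i => w i i0) P := by
  conv_lhs => rw [P.as_sum]
  conv_rhs => rw [P.as_sum]
  rw [map_sum, MvPolynomial.coeff_sum, map_sum]
  apply Finset.sum_congr rfl
  intro γ hγ
  have hdeg : γ.degree = l := by
    by_contra hne
    exact (mem_support_iff.mp hγ) (hP.coeff_eq_zero hne)
  rw [aeval_monomial, eval_monomial, algebraMap_eq, coeff_C_mul]
  congr 1
  have h1 : (γ.prod fun i e => (∑ j, C (w i j) * X j) ^ e)
      = (((Finsupp.toMultiset γ).map fun i => w i).map (fun v => ∑ j, C (v j) * X j)).prod := by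
    rw [Multiset.map_map]
    exact (vce_multiset_prod γ _).symm
  rw [h1, vce_coeff_single_prod, if_pos (by rw [Multiset.card_map, vce_card_toMultiset]; exact hdeg),
    Multiset.map_map]
  exact vce_multiset_prod γ _

/-- Evaluation of a homogeneous polynomial at a scaled point. -/
lemma vce_eval_smul {R : Type*} [CommRing R] {k l : ℕ} (p : MvPolynomial (Fin k) R)
    (hp : p.IsHomogeneous l) (c : R) (x : Fin k → R) :
    eval (fun i => c * x i) p = c ^ l * eval x p := by
  conv_lhs => rw [p.as_sum]
  conv_rhs => rw [p.as_sum]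
  rw [map_sum, map_sum, Finset.mul_sum]
  apply Finset.sum_congr rfl
  intro γ hγ
  have hdeg : γ.degree = l := by
    by_contra hne
    exact (mem_support_iff.mp hγ) (hp.coeff_eq_zero hne)
  rw [eval_monomial, eval_monomial, ← vce_multiset_prod γ (fun i => c * x i),
    ← vce_multiset_prod γ x]
  have : ((Finsupp.toMultiset γ).map fun i => c * x i).prod
      = ((Finsupp.toMultiset γ).map fun _ => c).prod * ((Finsupp.toMultiset γ).map x).prod :=
    Multiset.prod_map_mul
  rw [this, Multiset.map_const', Multiset.prod_replicate, vce_card_toMultiset, hdeg]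
  ring

/-- Composition of `eval` with a polynomial substitution. -/
lemma vce_eval_aeval {R : Type*} [CommRing R] {k : ℕ} (f : Fin k → MvPolynomial (Fin k) R)
    (x : Fin k → R) (p : MvPolynomial (Fin k) R) :
    eval x (aeval f p) = eval (fun i => eval x (f i)) p := by
  rw [aeval_def, algebraMap_eq, eval₂_comp_left (eval x) C f p]
  have hc : (eval x).comp (C : R →+* MvPolynomial (Fin k) R) = RingHom.id R := by
    ext a; simp
  rw [hc, eval₂_id]
  rfl

/-- A homogeneous polynomial over `ℚ` vanishing at all integer points with `i0`-th
coordinate equal to `1` is zero. -/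
lemma vce_homog_vanish {k l : ℕ} (i0 : Fin k) (p : MvPolynomial (Fin k) ℚ)
    (hp : p.IsHomogeneous l)
    (h0 : ∀ v : Fin k → ℤ, v i0 = 1 → eval (fun i => (v i : ℚ)) p = 0) : p = 0 := by
  set Q : MvPolynomial (Fin k) ℚ := aeval (fun i => if i = i0 then 1 else X i) p with hQdef
  have hcomp : ∀ (x : Fin k → ℚ),
      eval x Q = eval (fun i => if i = i0 then 1 else x i) p := by
    intro x
    rw [hQdef, vce_eval_aeval]
    have hfn : (fun i => eval x (if i = i0 then (1 : MvPolynomial (Fin k) ℚ) else X i))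
        = (fun i => if i = i0 then 1 else x i) := by
      funext i; by_cases h : i = i0 <;> simp [h]
    rw [hfn]
  have hQ0 : Q = 0 := by
    apply vce_eval_int_zero
    intro y
    rw [hcomp]
    have hpt : (fun i => if i = i0 then (1:ℚ) else (y i : ℚ))
        = fun i => (((fun i => if i = i0 then 1 else y i) i : ℤ) : ℚ) := by
      funext i; by_cases h : i = i0 <;> simp [h]
    rw [hpt]
    exact h0 (fun i => if i = i0 then 1 else y i) (by simp)
  have hx : ∀ x : Fin k → ℚ, x i0 ≠ 0 → eval x p = 0 := by
    intro x hx0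
    set z : Fin k → ℚ := fun i => (x i0)⁻¹ * x i with hz
    have hz0 : z i0 = 1 := inv_mul_cancel₀ hx0
    have h1 : eval z p = 0 := by
      have h2 := hcomp z
      rw [hQ0, map_zero] at h2
      have h3 : (fun i => if i = i0 then (1:ℚ) else z i) = z := by
        funext i; by_cases h : i = i0 <;> simp [h, hz0]
      rw [h3] at h2
      exact h2.symm
    have h4 : x = fun i => x i0 * z i := by
      funext i
      rw [hz]
      field_simp
    rw [h4, vce_eval_smul p hp, h1, mul_zero]
  have hfull : p * X i0 = 0 := by
    apply MvPolynomial.funext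
    intro x
    rw [map_mul, eval_X, map_zero]
    by_cases h : x i0 = 0
    · rw [h, mul_zero]
    · rw [hx x h, zero_mul]
  rcases mul_eq_zero.mp hfull with h | h
  · exact h
  · exact absurd h (X_ne_zero i0)

/-- There exist `ν = C(l+k−1, k−1)` integer matrices `L₁, …, L_ν` of determinant `1`
(automorphisms of `ℤ^k`) such that for each multi-index `γ₀` of degree `l` there are
integers `c₀ > 0, c₁, …, c_ν` with: for every homogeneous polynomial `P` of degree `l`,
`c₀ · (coefficient of x^{γ₀} in P) = Σ_j c_j · (coefficient of x₁^l in P(L_j x))`. -/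
theorem vandermonde_coefficient_extraction (k l : ℕ) (hk : 0 < k) (hl : 1 ≤ l) :
    ∃ L : Fin (Nat.choose (l + k - 1) (k - 1)) → Matrix (Fin k) (Fin k) ℤ,
      (∀ m, (L m).det = 1) ∧
      ∀ γ₀ : Fin k →₀ ℕ, (∑ i, γ₀ i) = l →
        ∃ c : Fin (Nat.choose (l + k - 1) (k - 1) + 1) → ℤ, 0 < c 0 ∧
          ∀ P : MvPolynomial (Fin k) ℝ, P.IsHomogeneous l →
            (c 0 : ℝ) * MvPolynomial.coeff γ₀ P =
              ∑ m, (c m.succ : ℝ) *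
                MvPolynomial.coeff (Finsupp.single (⟨0, hk⟩ : Fin k) l)
                  (MvPolynomial.aeval
                    (fun i => ∑ j, MvPolynomial.C ((L m i j : ℤ) : ℝ) * MvPolynomial.X j)
                    P) := by
  classical
  set ν := Nat.choose (l + k - 1) (k - 1) with hν
  set i0 : Fin k := ⟨0, hk⟩ with hi0
  set V : Submodule ℚ (MvPolynomial (Fin k) ℚ) := homogeneousSubmodule (Fin k) ℚ l with hV
  -- the monomial spanning set
  set g : Sym (Fin k) l → MvPolynomial (Fin k) ℚ :=
    fun s => monomial (Multiset.toFinsupp (s : Multiset (Fin k))) (1 : ℚ) with hg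
  have hVle : V ≤ Submodule.span ℚ (Set.range g) := by
    intro p hp
    have hph : p.IsHomogeneous l := (mem_homogeneousSubmodule _ _).mp hp
    rw [p.as_sum]
    apply Submodule.sum_mem
    intro γ hγ
    have hdeg : γ.degree = l := by
      by_contra hne
      exact (mem_support_iff.mp hγ) (hph.coeff_eq_zero hne)
    have hmono : monomial γ (coeff γ p) = (coeff γ p) • monomial γ (1:ℚ) := by
      rw [smul_monomial, smul_eq_mul, mul_one]
    rw [hmono]
    apply Submodule.smul_mem
    apply Submodule.subset_span
    refine ⟨⟨Finsupp.toMultiset γ, by rw [vce_card_toMultiset, hdeg]⟩, ?_⟩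
    simp [hg]
  haveI : FiniteDimensional ℚ (Submodule.span ℚ (Set.range g)) :=
    FiniteDimensional.span_of_finite ℚ (Set.finite_range g)
  haveI hVfd : FiniteDimensional ℚ V := Submodule.finiteDimensional_of_le hVle
  have hrank : Module.finrank ℚ V ≤ ν := by
    have h1 : Module.finrank ℚ V ≤ Module.finrank ℚ (Submodule.span ℚ (Set.range g)) :=
      Submodule.finrank_mono hVle
    have h2 : Module.finrank ℚ (Submodule.span ℚ (Set.range g))
        ≤ Fintype.card (Sym (Fin k) l) := by
      refine le_trans (finrank_span_le_card (Set.range g)) ?_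
      rw [Set.toFinset_range]
      exact le_trans (Finset.card_image_le) (by simp)
    have h3 : Fintype.card (Sym (Fin k) l) = (k + l - 1).choose l := by
      rw [Sym.card_sym_eq_choose, Fintype.card_fin]
    have h4 : (k + l - 1).choose l = ν := by
      rw [hν]
      have hkl : k + l - 1 = l + k - 1 := by omega
      have h5 : l ≤ l + k - 1 := by omega
      have := Nat.choose_symm h5
      have h6 : l + k - 1 - l = k - 1 := by omega
      rw [hkl, ← this, h6]
    omega
  -- evaluation functionals
  set ev : (Fin k → ℤ) → Module.Dual ℚ V := fun v =>
    ((aeval (fun i => (v i : ℚ)) : MvPolynomial (Fin k) ℚ →ₐ[ℚ] ℚ).toLinearMap).comp V.subtype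
    with hevdef
  have hev : ∀ (v : Fin k → ℤ) (P : V),
      ev v P = eval (fun i => (v i : ℚ)) (P : MvPolynomial (Fin k) ℚ) := by
    intro v P
    have : aeval (fun i => (v i : ℚ)) (P : MvPolynomial (Fin k) ℚ)
        = eval (fun i => (v i : ℚ)) (P : MvPolynomial (Fin k) ℚ) := by
      rw [← coe_aeval_eq_eval]; rfl
    simpa [hevdef] using this
  set S : Set (Fin k → ℤ) := {v | v i0 = 1} with hS
  have hspan : Submodule.span ℚ (ev '' S) = ⊤ := by
    have hco : (Submodule.span ℚ (ev '' S)).dualCoannihilator = ⊥ := by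
      rw [Submodule.eq_bot_iff]
      intro P hP
      rw [Submodule.mem_dualCoannihilator] at hP
      have h0 : ∀ v : Fin k → ℤ, v i0 = 1 →
          eval (fun i => (v i : ℚ)) (P : MvPolynomial (Fin k) ℚ) = 0 := by
        intro v hv
        rw [← hev v P]
        exact hP _ (Submodule.subset_span ⟨v, hv, rfl⟩)
      have hph : (P : MvPolynomial (Fin k) ℚ).IsHomogeneous l :=
        (mem_homogeneousSubmodule _ _).mp P.2
      have : (P : MvPolynomial (Fin k) ℚ) = 0 := vce_homog_vanish i0 _ hph h0
      exact Subtype.ext this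
    have hfr := Subspace.finrank_add_finrank_dualCoannihilator_eq (Submodule.span ℚ (ev '' S))
    rw [hco, finrank_bot, add_zero] at hfr
    apply Submodule.eq_top_of_finrank_eq
    rw [hfr, Subspace.dual_finrank_eq]
  -- a small spanning family
  obtain ⟨t, hts, htspan, htind⟩ := exists_linearIndependent ℚ (ev '' S)
  rw [hspan] at htspan
  have htfin : t.Finite := Set.finite_coe_iff.mp htind.finite
  haveI := htfin.fintype
  have hcard : Fintype.card t ≤ ν := by
    have h1 : Module.finrank ℚ (Submodule.span ℚ t) = t.toFinset.card :=
      finrank_span_set_eq_card htind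
    rw [htspan, finrank_top, Subspace.dual_finrank_eq, Set.toFinset_card] at h1
    omega
  have hch : ∀ f : t, ∃ v : Fin k → ℤ, v i0 = 1 ∧ ev v = (f : Module.Dual ℚ V) := by
    rintro ⟨f, hf⟩
    obtain ⟨v, hvS, hvf⟩ := hts hf
    exact ⟨v, hvS, hvf⟩
  choose w hw1 hw2 using hch
  set ec : t ≃ Fin (Fintype.card t) := Fintype.equivFin t with hec
  set u : Fin ν → (Fin k → ℤ) := fun m =>
    if h : (m : ℕ) < Fintype.card t then w (ec.symm ⟨m, h⟩)
    else (fun i => if i = i0 then 1 else 0) with hu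
  have hu1 : ∀ m, u m i0 = 1 := by
    intro m
    by_cases h : (m : ℕ) < Fintype.card t
    · simp only [hu, dif_pos h]; exact hw1 _
    · simp only [hu, dif_neg h]; simp
  have hcover : ∀ f ∈ t, ∃ m : Fin ν, ev (u m) = f := by
    intro f hf
    set j := ec ⟨f, hf⟩ with hj
    refine ⟨⟨(j : ℕ), lt_of_lt_of_le j.2 hcard⟩, ?_⟩
    simp only [hu]
    have hlt : ((⟨(j : ℕ), lt_of_lt_of_le j.2 hcard⟩ : Fin ν) : ℕ) < Fintype.card t := j.2
    rw [dif_pos hlt]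
    have : (⟨((⟨(j : ℕ), lt_of_lt_of_le j.2 hcard⟩ : Fin ν) : ℕ), hlt⟩ : Fin (Fintype.card t))
        = j := by ext; rfl
    rw [this, hj, Equiv.symm_apply_apply]
    exact hw2 ⟨f, hf⟩
  have hspanu : Submodule.span ℚ (Set.range fun m : Fin ν => ev (u m)) = ⊤ := by
    rw [eq_top_iff, ← htspan]
    apply Submodule.span_le.mpr
    intro f hf
    obtain ⟨m, hm⟩ := hcover f hf
    exact Submodule.subset_span ⟨m, hm⟩
  -- the matrices
  refine ⟨fun m => Matrix.of (fun i j => if j = i0 then u m i else if i = j then 1 else 0),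
    ?_, ?_⟩
  · intro m
    have hdet := Matrix.det_of_lowerTriangular
      (Matrix.of (fun i j => if j = i0 then u m i else if i = j then 1 else 0))
      (by
        intro i j hij
        have hji : i < j := hij
        have hj0 : j ≠ i0 := by
          intro h
          rw [h] at hji
          exact absurd hji (by simp [hi0, Fin.lt_def, Fin.le_def])
        simp only [Matrix.of_apply, if_neg hj0, if_neg (Fin.ne_of_lt hji)])
    rw [hdet]
    have : ∀ i : Fin k, (Matrix.of (fun i j => if j = i0 then u m i
        else if i = j then 1 else 0) : Matrix (Fin k) (Fin k) ℤ) i i = 1 := by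
      intro i
      by_cases h : i = i0
      · simp [Matrix.of_apply, h, hu1 m]
      · simp [Matrix.of_apply, h]
    rw [Finset.prod_congr rfl (fun i _ => this i), Finset.prod_const_one]
  -- per multi-index γ₀
  intro γ₀ hγ₀
  have hγ₀deg : γ₀.degree = l := by
    rw [← hγ₀, Finsupp.degree]
    exact Finset.sum_subset (Finset.subset_univ _)
      (fun i _ hi => Finsupp.notMem_support_iff.mp hi)
  -- the coefficient functional
  set κ : Module.Dual ℚ V := (MvPolynomial.lcoeff ℚ γ₀).comp V.subtype with hκ
  have hκmem : κ ∈ Submodule.span ℚ (Set.range fun m : Fin ν => ev (u m)) := by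
    rw [hspanu]; trivial
  obtain ⟨r, hr⟩ := (Submodule.mem_span_range_iff_exists_fun ℚ).mp hκmem
  -- rational identities for each monomial of degree l
  have hQid : ∀ γ : Fin k →₀ ℕ, γ.degree = l →
      (∑ m : Fin ν, r m * (γ.prod fun i e => ((u m i : ℤ) : ℚ) ^ e))
        = if γ = γ₀ then 1 else 0 := by
    intro γ hdeg
    have hmem : (monomial γ (1:ℚ) : MvPolynomial (Fin k) ℚ) ∈ V :=
      (mem_homogeneousSubmodule _ _).mpr (isHomogeneous_monomial _ hdeg)
    have := congrArg (fun f : Module.Dual ℚ V => f ⟨monomial γ (1:ℚ), hmem⟩) hr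
    simp only [LinearMap.coe_sum, Finset.sum_apply, LinearMap.smul_apply,
      smul_eq_mul] at this
    have hlhs : ∀ m : Fin ν, ev (u m) ⟨monomial γ (1:ℚ), hmem⟩
        = γ.prod fun i e => ((u m i : ℤ) : ℚ) ^ e := by
      intro m
      rw [hev]
      simp [eval_monomial]
    have hrhs : κ ⟨monomial γ (1:ℚ), hmem⟩ = if γ = γ₀ then 1 else 0 := by
      simp only [hκ, LinearMap.comp_apply, Submodule.subtype_apply, MvPolynomial.lcoeff_apply]
      rw [coeff_monomial]
    rw [← hrhs]
    rw [← this]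
    exact Finset.sum_congr rfl (fun m _ => by rw [hlhs m])
  -- clear denominators
  set d : ℕ := ∏ m : Fin ν, (r m).den with hd
  have hdpos : 0 < d := Finset.prod_pos (fun m _ => (r m).pos)
  set c : Fin (ν + 1) → ℤ := Fin.cases (d : ℤ) (fun m => ((d : ℚ) * r m).num) with hc
  have hc0 : c 0 = (d : ℤ) := rfl
  have hcint : ∀ m : Fin ν, ((c m.succ : ℤ) : ℚ) = (d : ℚ) * r m := by
    intro m
    have hcs : c m.succ = ((d : ℚ) * r m).num := by rw [hc]; simp
    have hdvd : (r m).den ∣ d := Finset.dvd_prod_of_mem _ (Finset.mem_univ m)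
    obtain ⟨e, he⟩ := hdvd
    have hval : (d : ℚ) * r m = ((e * (r m).num : ℤ) : ℚ) := by
      rw [he]
      push_cast
      rw [mul_comm ((r m).den : ℚ) (e : ℚ), mul_assoc]
      congr 1
      rw [mul_comm]
      exact Rat.mul_den_eq_num (r m)
    rw [hcs, hval, Rat.num_intCast]
  refine ⟨c, by rw [hc0]; exact_mod_cast hdpos, ?_⟩
  -- real identities
  have hRid : ∀ γ : Fin k →₀ ℕ, γ.degree = l →
      (∑ m : Fin ν, (c m.succ : ℝ) * (γ.prod fun i e => ((u m i : ℤ) : ℝ) ^ e))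
        = (c 0 : ℝ) * (if γ = γ₀ then 1 else 0) := by
    intro γ hdeg
    have h1 := hQid γ hdeg
    have h2 := congrArg (fun q : ℚ => ((d : ℚ) * q : ℚ)) h1
    simp only [Finset.mul_sum] at h2
    have h3 : ∀ m : Fin ν, (d : ℚ) * (r m * (γ.prod fun i e => ((u m i : ℤ) : ℚ) ^ e))
        = ((c m.succ : ℤ) : ℚ) * (γ.prod fun i e => ((u m i : ℤ) : ℚ) ^ e) := by
      intro m
      rw [hcint m]; ring
    rw [Finset.sum_congr rfl (fun m _ => h3 m)] at h2
    have h4 := congrArg (fun q : ℚ => ((q : ℝ) : ℝ)) h2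
    simp only [Rat.cast_sum, Rat.cast_mul, Rat.cast_intCast, Rat.cast_natCast] at h4
    have h5 : ∀ m : Fin ν, ((γ.prod fun i e => ((u m i : ℤ) : ℚ) ^ e : ℚ) : ℝ)
        = γ.prod fun i e => ((u m i : ℤ) : ℝ) ^ e := by
      intro m
      rw [Finsupp.prod, Finsupp.prod]
      push_cast
      rfl
    rw [Finset.sum_congr rfl (fun m _ => by rw [h5 m])] at h4
    rw [h4, hc0]
    push_cast
    by_cases h : γ = γ₀ <;> simp [h]
  -- final identity
  intro P hP
  have hA : ∀ m : Fin ν,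
      MvPolynomial.coeff (Finsupp.single i0 l)
        (MvPolynomial.aeval
          (fun i => ∑ j, MvPolynomial.C (((Matrix.of (fun i j => if j = i0 then u m i
            else if i = j then 1 else 0) : Matrix (Fin k) (Fin k) ℤ) i j : ℝ))
            * MvPolynomial.X j) P)
      = eval (fun i => ((u m i : ℤ) : ℝ)) P := by
    intro m
    rw [vce_coeff_aeval i0 l _ P hP]
    all_goals congr 1
    all_goals funext i
    all_goals simp [Matrix.of_apply]
  rw [Finset.sum_congr rfl (fun m _ => by rw [hA m])]
  have heval : ∀ m : Fin ν, eval (fun i => ((u m i : ℤ) : ℝ)) P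
      = ∑ γ ∈ P.support, coeff γ P * (γ.prod fun i e => ((u m i : ℤ) : ℝ) ^ e) := by
    intro m
    rw [eval_eq]
    rfl
  have hswap : ∑ m : Fin ν, (c m.succ : ℝ) * eval (fun i => ((u m i : ℤ) : ℝ)) P
      = ∑ γ ∈ P.support, ∑ m : Fin ν, (c m.succ : ℝ) *
          (coeff γ P * (γ.prod fun i e => ((u m i : ℤ) : ℝ) ^ e)) := by
    rw [Finset.sum_congr rfl (fun m (_ : m ∈ Finset.univ) => by
      rw [heval m, Finset.mul_sum])]
    exact Finset.sum_comm
  rw [hswap]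
  have hterm : ∀ γ ∈ P.support,
      (∑ m : Fin ν, (c m.succ : ℝ) * (coeff γ P * (γ.prod fun i e => ((u m i : ℤ) : ℝ) ^ e)))
        = if γ = γ₀ then (c 0 : ℝ) * coeff γ P else 0 := by
    intro γ hγ
    have hdeg : γ.degree = l := by
      by_contra hne
      exact (mem_support_iff.mp hγ) (hP.coeff_eq_zero hne)
    have h1 : (∑ m : Fin ν, (c m.succ : ℝ) * (coeff γ P *
        (γ.prod fun i e => ((u m i : ℤ) : ℝ) ^ e)))
        = coeff γ P * ∑ m : Fin ν, (c m.succ : ℝ) *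
          (γ.prod fun i e => ((u m i : ℤ) : ℝ) ^ e) := by
      rw [Finset.mul_sum]
      exact Finset.sum_congr rfl (fun m _ => by ring)
    rw [h1, hRid γ hdeg]
    by_cases h : γ = γ₀ <;> simp [h] <;> ring
  rw [Finset.sum_congr rfl hterm, Finset.sum_ite_eq' P.support γ₀
    (fun γ => (c 0 : ℝ) * coeff γ P)]
  by_cases h : γ₀ ∈ P.support
  · rw [if_pos h]
  · rw [if_neg h, MvPolynomial.notMem_support_iff.mp h, mul_zero]
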